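/- arXiv:2502.20565 — 3 statements merged into one kernel-verified Lean document; each statement's English description precedes it below -/
import Mathlib

section
/- If f : ℝ^d → ℝ is L-smooth, λ > 0, and f_λ(x) = E_v[f(x + λv)] with v uniform on the ball of radius √d, then for all x, ‖∇f(x) − ∇f_λ(x)‖ ≤ (L/2)·λ·d^{3/2}. -/
open MeasureTheory Metric InnerProductSpace

/-- The uniform probability measure on the Euclidean ball of radius `√d` in `ℝ^d`. -/
noncomputable def ballUniform (d : ℕ) : Measure (EuclideanSpace ℝ (Fin d)) :=
  (volume (Metric.closedBall (0 : EuclideanSpace ℝ (Fin d)) (Real.sqrt d)))⁻¹ •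
    volume.restrict (Metric.closedBall (0 : EuclideanSpace ℝ (Fin d)) (Real.sqrt d))

section aux
variable {d : ℕ}

lemma ballUniform_vol_ne_zero (hd : 0 < d) :
    volume (closedBall (0 : EuclideanSpace ℝ (Fin d)) (Real.sqrt d)) ≠ 0 :=
  (measure_closedBall_pos _ _ (Real.sqrt_pos.mpr (by exact_mod_cast hd))).ne'

lemma ballUniform_vol_ne_top :
    volume (closedBall (0 : EuclideanSpace ℝ (Fin d)) (Real.sqrt d)) ≠ ⊤ :=
  measure_closedBall_lt_top.ne

lemma ballUniform_isProb (hd : 0 < d) : IsProbabilityMeasure (ballUniform d) := by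
  constructor
  rw [ballUniform, Measure.smul_apply, Measure.restrict_apply_univ, smul_eq_mul]
  exact ENNReal.inv_mul_cancel (ballUniform_vol_ne_zero hd) ballUniform_vol_ne_top

lemma ballUniform_ae_norm_le (d : ℕ) :
    ∀ᵐ v ∂(ballUniform d), ‖v‖ ≤ Real.sqrt d := by
  rw [ballUniform]
  refine Measure.ae_smul_measure ?_ _
  filter_upwards [ae_restrict_mem measurableSet_closedBall] with v hv
  simpa [mem_closedBall_zero_iff] using hv

lemma integrable_ballUniform (hd : 0 < d) {G : Type*} [NormedAddCommGroup G]
    {g : EuclideanSpace ℝ (Fin d) → G} (hg : Continuous g) :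
    Integrable g (ballUniform d) := by
  rw [ballUniform]
  exact ((hg.locallyIntegrable.integrableOn_isCompact (isCompact_closedBall _ _))).smul_measure
    (ENNReal.inv_ne_top.mpr (ballUniform_vol_ne_zero hd))

lemma integral_norm_ballUniform_one : ∫ v, ‖v‖ ∂(ballUniform 1) = 1 / 2 := by
  set ψ : EuclideanSpace ℝ (Fin 1) ≃ᵐ ℝ :=
    (MeasurableEquiv.toLp 2 (Fin 1 → ℝ)).symm.trans (MeasurableEquiv.funUnique (Fin 1) ℝ) with hψdef
  have hψ : MeasurePreserving ψ volume volume :=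
    (volume_preserving_funUnique (Fin 1) ℝ).comp
      (EuclideanSpace.volume_preserving_symm_measurableEquiv_toLp _)
  have hnorm : ∀ v : EuclideanSpace ℝ (Fin 1), ‖v‖ = |ψ v| := by
    intro v
    rw [EuclideanSpace.norm_eq]
    simp [hψdef, Fin.sum_univ_one, Real.norm_eq_abs, Real.sqrt_sq_eq_abs, sq_abs,
      MeasurableEquiv.funUnique, MeasurableEquiv.toLp]
    rfl
  have hK : closedBall (0 : EuclideanSpace ℝ (Fin 1)) (Real.sqrt 1)
      = ψ ⁻¹' (Set.Icc (-1 : ℝ) 1) := by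
    ext v
    simp [mem_closedBall_zero_iff, hnorm v, Real.sqrt_one, abs_le]
  have hrestr : MeasurePreserving ψ
      (volume.restrict (closedBall (0 : EuclideanSpace ℝ (Fin 1)) (Real.sqrt 1)))
      (volume.restrict (Set.Icc (-1 : ℝ) 1)) := by
    rw [hK]; exact hψ.restrict_preimage measurableSet_Icc
  have hvol : volume (closedBall (0 : EuclideanSpace ℝ (Fin 1)) (Real.sqrt 1))
      = ENNReal.ofReal 2 := by
    rw [hK, hψ.measure_preimage measurableSet_Icc.nullMeasurableSet, Real.volume_Icc]
    norm_num
  have hint : ∫ v in closedBall (0 : EuclideanSpace ℝ (Fin 1)) (Real.sqrt 1), ‖v‖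
      = ∫ t in Set.Icc (-1 : ℝ) 1, |t| := by
    rw [show (fun v : EuclideanSpace ℝ (Fin 1) => ‖v‖) = fun v => |ψ v| from funext hnorm]
    exact hrestr.integral_comp ψ.measurableEmbedding _
  have habs : ∫ t in Set.Icc (-1 : ℝ) 1, |t| = 1 := by
    rw [integral_Icc_eq_integral_Ioc,
      ← intervalIntegral.integral_of_le (by norm_num : (-1 : ℝ) ≤ 1)]
    have h1 : IntervalIntegrable (fun t : ℝ => |t|) volume (-1) 0 :=
      continuous_abs.intervalIntegrable _ _
    have h2 : IntervalIntegrable (fun t : ℝ => |t|) volume 0 1 :=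
      continuous_abs.intervalIntegrable _ _
    rw [← intervalIntegral.integral_add_adjacent_intervals h1 h2]
    have e1 : ∫ t in (-1:ℝ)..0, |t| = ∫ t in (-1:ℝ)..0, -t := by
      apply intervalIntegral.integral_congr
      intro t ht
      rw [Set.uIcc_of_le (by norm_num : (-1:ℝ) ≤ 0)] at ht
      exact abs_of_nonpos ht.2
    have e2 : ∫ t in (0:ℝ)..1, |t| = ∫ t in (0:ℝ)..1, t := by
      apply intervalIntegral.integral_congr
      intro t ht
      rw [Set.uIcc_of_le (by norm_num : (0:ℝ) ≤ 1)] at ht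
      exact abs_of_nonneg ht.1
    rw [e1, e2, intervalIntegral.integral_neg, integral_id, integral_id]
    norm_num
  rw [ballUniform, integral_smul_measure]
  simp only [Nat.cast_one]
  rw [hvol, hint, habs]
  rw [ENNReal.toReal_inv, ENNReal.toReal_ofReal (by norm_num : (0:ℝ) ≤ 2)]
  norm_num

end aux


set_option maxHeartbeats 1000000 in
/-- If `f : ℝ^d → ℝ` is L-smooth, `λ > 0`, and
`f_λ(x) = E_v[f(x + λ v)]` with `v` uniform on the ball of radius `√d`, then for all `x`,
`‖∇f(x) - ∇f_λ(x)‖ ≤ (L/2)·λ·d^{3/2}`. -/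
theorem stmt1 {d : ℕ} (f : EuclideanSpace ℝ (Fin d) → ℝ) (L lam : ℝ)
    (hlam : 0 < lam)
    (hdiff : ∀ x, DifferentiableAt ℝ f x)
    (hsmooth : ∀ x y, ‖gradient f x - gradient f y‖ ≤ L * ‖x - y‖)
    (flam : EuclideanSpace ℝ (Fin d) → ℝ)
    (hflam : ∀ x, flam x = ∫ v, f (x + lam • v) ∂(ballUniform d))
    (x : EuclideanSpace ℝ (Fin d)) :
    ‖gradient f x - gradient flam x‖ ≤ (L / 2) * lam * (d : ℝ) ^ ((3 : ℝ) / 2) := by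
  rcases Nat.eq_zero_or_pos d with hd0 | hd
  · subst hd0
    haveI : Subsingleton (EuclideanSpace ℝ (Fin 0)) := ⟨fun a b => by ext i; exact i.elim0⟩
    rw [Subsingleton.elim (gradient f x - gradient flam x) 0, norm_zero]
    rw [show ((0:ℕ):ℝ) = 0 by norm_num, Real.zero_rpow (by norm_num)]
    simp
  -- main case
  haveI : IsProbabilityMeasure (ballUniform d) := ballUniform_isProb hd
  have hdR : (1:ℝ) ≤ (d:ℝ) := by exact_mod_cast hd
  have hsq : 0 < Real.sqrt d := Real.sqrt_pos.mpr (by linarith)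
  -- L ≥ 0
  have hL0 : 0 ≤ L := by
    have h := hsmooth (EuclideanSpace.single ⟨0, hd⟩ (1:ℝ)) 0
    rw [sub_zero, EuclideanSpace.norm_single] at h
    simpa using (norm_nonneg _).trans h
  -- Lipschitz bound on fderiv
  have hfd : ∀ a b : (EuclideanSpace ℝ (Fin d)), ‖fderiv ℝ f a - fderiv ℝ f b‖ ≤ L * ‖a - b‖ := by
    intro a b
    have h := hsmooth a b
    rwa [gradient, gradient, ← map_sub, LinearIsometryEquiv.norm_map] at h
  have hfc : Continuous f := continuous_iff_continuousAt.mpr fun y => (hdiff y).continuousAt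
  have hgradlip : LipschitzWith (Real.toNNReal L) (gradient f) :=
    LipschitzWith.of_dist_le_mul fun a b => by
      rw [dist_eq_norm, dist_eq_norm]
      exact (hsmooth a b).trans (mul_le_mul_of_nonneg_right
        (Real.le_coe_toNNReal L) (norm_nonneg _))
  have hfdc : Continuous (fderiv ℝ f) := by
    have he : (fderiv ℝ f) = fun y => (toDual ℝ (EuclideanSpace ℝ (Fin d))) (gradient f y) :=
      funext fun y => by rw [gradient, LinearIsometryEquiv.apply_symm_apply]
    rw [he]
    exact (toDual ℝ (EuclideanSpace ℝ (Fin d))).continuous.comp hgradlip.continuous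
  have hcont_trans : ∀ (y : (EuclideanSpace ℝ (Fin d))), Continuous fun v : (EuclideanSpace ℝ (Fin d)) => y + lam • v :=
    fun y => continuous_const.add (continuous_id.const_smul lam)
  -- differentiation under the integral sign
  have hder : HasFDerivAt (fun x' => ∫ v, f (x' + lam • v) ∂(ballUniform d))
      (∫ v, fderiv ℝ f (x + lam • v) ∂(ballUniform d)) x := by
    refine hasFDerivAt_integral_of_dominated_of_fderiv_le
      (F' := fun x' v => fderiv ℝ f (x' + lam • v))
      (bound := fun _ => ‖fderiv ℝ f x‖ + L * (1 + lam * Real.sqrt d))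
      (ball_mem_nhds x one_pos) ?_ ?_ ?_ ?_ ?_ ?_
    · exact Filter.Eventually.of_forall fun y =>
        ((hfc.comp (hcont_trans y)).aestronglyMeasurable)
    · exact integrable_ballUniform hd (hfc.comp (hcont_trans x))
    · exact (hfdc.comp (hcont_trans x)).aestronglyMeasurable
    · filter_upwards [ballUniform_ae_norm_le d] with v hv
      intro x' hx'
      have h0 : ‖fderiv ℝ f (x' + lam • v)‖
          ≤ ‖fderiv ℝ f x‖ + ‖fderiv ℝ f (x' + lam • v) - fderiv ℝ f x‖ := by
        have := norm_add_le (fderiv ℝ f x) (fderiv ℝ f (x' + lam • v) - fderiv ℝ f x)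
        simpa using this
      have h1 := hfd (x' + lam • v) x
      have h2 : ‖x' + lam • v - x‖ ≤ 1 + lam * Real.sqrt d := by
        have he : x' + lam • v - x = (x' - x) + lam • v := by abel
        rw [he]
        refine (norm_add_le _ _).trans ?_
        have hb : ‖x' - x‖ < 1 := mem_ball_iff_norm.mp hx'
        have hnv : ‖lam • v‖ = lam * ‖v‖ := by
          rw [norm_smul, Real.norm_eq_abs, abs_of_pos hlam]
        rw [hnv]
        have := mul_le_mul_of_nonneg_left hv hlam.le
        linarith
      have h3 : L * ‖x' + lam • v - x‖ ≤ L * (1 + lam * Real.sqrt d) :=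
        mul_le_mul_of_nonneg_left h2 hL0
      linarith
    · exact integrable_const _
    · refine Filter.Eventually.of_forall fun v x' _ => ?_
      have h1 : HasFDerivAt (fun y : (EuclideanSpace ℝ (Fin d)) => y + lam • v) (ContinuousLinearMap.id ℝ (EuclideanSpace ℝ (Fin d))) x' := by
        simpa using (hasFDerivAt_id x').add_const (lam • v)
      have h2 := (hdiff (x' + lam • v)).hasFDerivAt.comp x' h1
      exact h2
  have hInt : Integrable (fun v => fderiv ℝ f (x + lam • v)) (ballUniform d) :=
    integrable_ballUniform hd (hfdc.comp (hcont_trans x))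
  -- rewrite the goal's LHS
  have hflam' : flam = fun x' => ∫ v, f (x' + lam • v) ∂(ballUniform d) := funext hflam
  have hfdflam : fderiv ℝ flam x = ∫ v, fderiv ℝ f (x + lam • v) ∂(ballUniform d) := by
    rw [hflam']; exact hder.fderiv
  have key : ‖gradient f x - gradient flam x‖
      = ‖fderiv ℝ f x - ∫ v, fderiv ℝ f (x + lam • v) ∂(ballUniform d)‖ := by
    rw [gradient, gradient, hfdflam, ← map_sub, LinearIsometryEquiv.norm_map]
  rw [key]
  have e1 : fderiv ℝ f x - (∫ v, fderiv ℝ f (x + lam • v) ∂(ballUniform d))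
      = ∫ v, (fderiv ℝ f x - fderiv ℝ f (x + lam • v)) ∂(ballUniform d) := by
    rw [integral_sub (integrable_const _) hInt, integral_const]
    simp
  rw [e1]
  have hIntSub : Integrable (fun v => ‖fderiv ℝ f x - fderiv ℝ f (x + lam • v)‖)
      (ballUniform d) :=
    integrable_ballUniform hd ((continuous_const.sub (hfdc.comp (hcont_trans x))).norm)
  have hIntBnd : Integrable (fun v : (EuclideanSpace ℝ (Fin d)) => L * lam * ‖v‖) (ballUniform d) :=
    integrable_ballUniform hd (continuous_const.mul continuous_norm)
  have hIntNorm : Integrable (fun v : (EuclideanSpace ℝ (Fin d)) => ‖v‖) (ballUniform d) :=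
    integrable_ballUniform hd continuous_norm
  have step1 : ‖∫ v, (fderiv ℝ f x - fderiv ℝ f (x + lam • v)) ∂(ballUniform d)‖
      ≤ L * lam * ∫ v, ‖v‖ ∂(ballUniform d) := by
    refine (norm_integral_le_integral_norm _).trans ?_
    rw [← integral_const_mul]
    refine integral_mono hIntSub hIntBnd fun v => ?_
    have h1 := hfd x (x + lam • v)
    have h2 : x - (x + lam • v) = -(lam • v) := by abel
    rw [h2, norm_neg, norm_smul, Real.norm_eq_abs, abs_of_pos hlam] at h1
    calc ‖fderiv ℝ f x - fderiv ℝ f (x + lam • v)‖ ≤ L * (lam * ‖v‖) := h1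
      _ = L * lam * ‖v‖ := by ring
  have Ibound : ∫ v, ‖v‖ ∂(ballUniform d) ≤ (d : ℝ) * Real.sqrt d / 2 := by
    rcases eq_or_lt_of_le (show 1 ≤ d from hd) with hd1 | hd2
    · have : d = 1 := hd1.symm
      subst this
      rw [integral_norm_ballUniform_one]
      norm_num [Real.sqrt_one]
    · have hd2' : (2:ℝ) ≤ (d:ℝ) := by exact_mod_cast hd2
      have : ∫ v, ‖v‖ ∂(ballUniform d) ≤ Real.sqrt d := by
        have := integral_mono_ae hIntNorm (integrable_const (Real.sqrt d))
          (ballUniform_ae_norm_le d)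
        simpa using this
      nlinarith [hsq]
  have hfinal : L * lam * ∫ v, ‖v‖ ∂(ballUniform d) ≤ L * lam * ((d : ℝ) * Real.sqrt d / 2) :=
    mul_le_mul_of_nonneg_left Ibound (by positivity)
  have hrpow : (d : ℝ) ^ ((3 : ℝ) / 2) = (d : ℝ) * Real.sqrt d := by
    rw [show (3:ℝ)/2 = 1 + 1/2 by norm_num, Real.rpow_add (by linarith), Real.rpow_one,
      ← Real.sqrt_eq_rpow]
  rw [hrpow]
  calc ‖∫ v, (fderiv ℝ f x - fderiv ℝ f (x + lam • v)) ∂(ballUniform d)‖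
      ≤ L * lam * ∫ v, ‖v‖ ∂(ballUniform d) := step1
    _ ≤ L * lam * ((d : ℝ) * Real.sqrt d / 2) := hfinal
    _ = L / 2 * lam * ((d : ℝ) * Real.sqrt d) := by ring
end

section
/- If f : ℝ^d → ℝ is L-smooth and g(x) = ((f(x + λu) − f(x − λu))/(2λ))·u with u uniform on the sphere of radius √d, then E_u[‖g(x)‖²] ≤ 2d·‖∇f(x)‖² + (L²/2)·λ²·d³. -/
open MeasureTheory

open scoped RealInnerProductSpace


lemma taylor_bound' {F : Type*} [NormedAddCommGroup F] [InnerProductSpace ℝ F] [CompleteSpace F]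
    (f : F → ℝ) (L : ℝ)
    (hdiff : ∀ x, DifferentiableAt ℝ f x)
    (hsmooth : ∀ x y, ‖gradient f x - gradient f y‖ ≤ L * ‖x - y‖)
    (a b : F) :
    |f b - f a - ⟪gradient f a, b - a⟫| ≤ L / 2 * ‖b - a‖ ^ 2 := by
  set v := b - a with hv
  have hinner : ∀ (z : F) (w : F), (fderiv ℝ f z) w = ⟪gradient f z, w⟫ := by
    intro z w
    simp only [gradient]; rw [InnerProductSpace.toDual_symm_apply]
  set φ : ℝ → ℝ := fun t => f (a + t • v) - f a - t * ⟪gradient f a, v⟫ with hφdef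
  have hline : ∀ t : ℝ, HasDerivAt (fun s : ℝ => a + s • v) v t := by
    intro t
    simpa using ((hasDerivAt_id t).smul_const v).const_add a
  have hφ' : ∀ t : ℝ, HasDerivAt φ (⟪gradient f (a + t • v) - gradient f a, v⟫) t := by
    intro t
    have h1 : HasDerivAt (fun s : ℝ => f (a + s • v)) ((fderiv ℝ f (a + t • v)) v) t :=
      (hdiff _).hasFDerivAt.comp_hasDerivAt t (hline t)
    have h2 : HasDerivAt φ ((fderiv ℝ f (a + t • v)) v - ⟪gradient f a, v⟫) t :=
      (h1.sub_const (f a)).sub (hasDerivAt_mul_const _)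
    rw [hinner] at h2
    simpa [inner_sub_left] using h2
  have key := image_norm_le_of_norm_deriv_right_le_deriv_boundary
    (f := φ) (f' := fun t => ⟪gradient f (a + t • v) - gradient f a, v⟫)
    (a := 0) (b := 1)
    (B := fun t => L * ‖v‖ ^ 2 / 2 * t ^ 2) (B' := fun t => L * ‖v‖ ^ 2 * t)
    (fun t _ => ((hφ' t).differentiableAt.continuousAt).continuousWithinAt)
    (fun t _ => (hφ' t).hasDerivWithinAt)
    (by simp [hφdef])
    (fun t => by
      have := (hasDerivAt_pow 2 t).const_mul (L * ‖v‖ ^ 2 / 2)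
      convert this using 1
      · rfl
      · rfl
      · norm_num
        ring)
    (by
      intro t ht
      have h1 : |(⟪gradient f (a + t • v) - gradient f a, v⟫ : ℝ)| ≤
          ‖gradient f (a + t • v) - gradient f a‖ * ‖v‖ := abs_real_inner_le_norm _ _
      have h2 : ‖gradient f (a + t • v) - gradient f a‖ ≤ L * (t * ‖v‖) := by
        have := hsmooth (a + t • v) a
        simpa [norm_smul, abs_of_nonneg ht.1] using this
      have h3 : ‖gradient f (a + t • v) - gradient f a‖ * ‖v‖ ≤ L * (t * ‖v‖) * ‖v‖ :=
        mul_le_mul_of_nonneg_right h2 (norm_nonneg v)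
      have : |(⟪gradient f (a + t • v) - gradient f a, v⟫ : ℝ)| ≤ L * ‖v‖ ^ 2 * t := by
        calc _ ≤ L * (t * ‖v‖) * ‖v‖ := h1.trans h3
        _ = L * ‖v‖ ^ 2 * t := by ring
      simpa [Real.norm_eq_abs] using this)
  have hkey := key (Set.right_mem_Icc.mpr zero_le_one)
  have hφ1 : φ 1 = f b - f a - ⟪gradient f a, v⟫ := by
    simp [hφdef, hv]
  rw [hφ1] at hkey
  rw [Real.norm_eq_abs] at hkey
  calc |f b - f a - ⟪gradient f a, v⟫| ≤ L * ‖v‖ ^ 2 / 2 * 1 ^ 2 := hkey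
  _ = L / 2 * ‖v‖ ^ 2 := by ring


lemma sphere_ae' {d : ℕ} (μ : Measure (EuclideanSpace ℝ (Fin d))) [IsProbabilityMeasure μ]
    (hsupp : μ (Metric.sphere (0 : EuclideanSpace ℝ (Fin d)) (Real.sqrt d)) = 1) :
    ∀ᵐ u ∂μ, ‖u‖ = Real.sqrt d := by
  have hms : MeasurableSet (Metric.sphere (0 : EuclideanSpace ℝ (Fin d)) (Real.sqrt d)) :=
    Metric.isClosed_sphere.measurableSet
  have h0 : μ (Metric.sphere (0 : EuclideanSpace ℝ (Fin d)) (Real.sqrt d))ᶜ = 0 := by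
    rw [measure_compl hms (measure_ne_top μ _), hsupp, measure_univ, tsub_self]
  filter_upwards [MeasureTheory.mem_ae_iff.mpr h0] with u hu
  simpa [Metric.mem_sphere, dist_zero_right] using hu

lemma integrable_of_sphere_bound' {d : ℕ} (μ : Measure (EuclideanSpace ℝ (Fin d)))
    [IsProbabilityMeasure μ]
    (hsupp : μ (Metric.sphere (0 : EuclideanSpace ℝ (Fin d)) (Real.sqrt d)) = 1)
    (h : EuclideanSpace ℝ (Fin d) → ℝ) (C : ℝ) (hc : Continuous h)
    (hb : ∀ u, ‖u‖ = Real.sqrt d → |h u| ≤ C) : Integrable h μ := by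
  refine Integrable.mono' (integrable_const C) hc.aestronglyMeasurable ?_
  filter_upwards [sphere_ae' μ hsupp] with u hu
  simpa [Real.norm_eq_abs] using hb u hu

lemma second_moment' {d : ℕ}
    (μ : Measure (EuclideanSpace ℝ (Fin d))) [IsProbabilityMeasure μ]
    (hsupp : μ (Metric.sphere (0 : EuclideanSpace ℝ (Fin d)) (Real.sqrt d)) = 1)
    (hinv : ∀ T : EuclideanSpace ℝ (Fin d) ≃ₗᵢ[ℝ] EuclideanSpace ℝ (Fin d),
      Measure.map (⇑T) μ = μ)
    (v : EuclideanSpace ℝ (Fin d)) :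
    ∫ u, ⟪v, u⟫ ^ 2 ∂μ = ‖v‖ ^ 2 := by
  have hd0 : (0:ℝ) ≤ (d:ℝ) := Nat.cast_nonneg d
  have hae := sphere_ae' μ hsupp
  have hu2 : ∀ᵐ u ∂μ, ‖u‖ ^ 2 = (d:ℝ) := by
    filter_upwards [hae] with u hu
    rw [hu]; exact Real.sq_sqrt hd0
  -- continuity and integrability of u ↦ ⟪w,u⟫^2
  have hcont : ∀ w : EuclideanSpace ℝ (Fin d), Continuous fun u : EuclideanSpace ℝ (Fin d) =>
      (⟪w, u⟫ : ℝ) ^ 2 := fun w => (continuous_const.inner continuous_id).pow 2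
  have hbnd : ∀ w : EuclideanSpace ℝ (Fin d), ∀ u, ‖u‖ = Real.sqrt d →
      |(⟪w, u⟫ : ℝ) ^ 2| ≤ ‖w‖ ^ 2 * d := by
    intro w u hu
    have h1 : |(⟪w, u⟫ : ℝ)| ≤ ‖w‖ * ‖u‖ := abs_real_inner_le_norm w u
    have h2 : ‖u‖ ^ 2 = (d:ℝ) := by rw [hu]; exact Real.sq_sqrt hd0
    rw [abs_pow ]
    calc |(⟪w, u⟫ : ℝ)| ^ 2 ≤ (‖w‖ * ‖u‖) ^ 2 := by
          exact pow_le_pow_left₀ (abs_nonneg _) h1 2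
    _ = ‖w‖ ^ 2 * (d:ℝ) := by rw [mul_pow, h2]
  have hint : ∀ w : EuclideanSpace ℝ (Fin d),
      Integrable (fun u => (⟪w, u⟫ : ℝ) ^ 2) μ := fun w =>
    integrable_of_sphere_bound' μ hsupp _ _ (hcont w) (hbnd w)
  set φ : EuclideanSpace ℝ (Fin d) → ℝ := fun w => ∫ u, (⟪w, u⟫ : ℝ) ^ 2 ∂μ with hφdef
  -- invariance
  have hφT : ∀ (T : EuclideanSpace ℝ (Fin d) ≃ₗᵢ[ℝ] EuclideanSpace ℝ (Fin d)) (w),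
      φ (T w) = φ w := by
    intro T w
    have hm : AEMeasurable (⇑T) μ := T.continuous.measurable.aemeasurable
    calc φ (T w) = ∫ u, (⟪T w, u⟫ : ℝ) ^ 2 ∂(Measure.map (⇑T) μ) := by rw [hinv T]
    _ = ∫ u, (⟪T w, T u⟫ : ℝ) ^ 2 ∂μ :=
        integral_map hm (hcont (T w)).aestronglyMeasurable
    _ = φ w := by simp only [T.inner_map_map]; rfl
  -- sum over basis
  have hsingle : ∀ i : Fin d, φ (EuclideanSpace.single i (1:ℝ)) = ∫ u, (u i) ^ 2 ∂μ := by
    intro i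
    simp [hφdef, EuclideanSpace.inner_single_left]
  have hnormsq : ∀ u : EuclideanSpace ℝ (Fin d), ∑ i, (u i) ^ 2 = ‖u‖ ^ 2 := by
    intro u
    rw [EuclideanSpace.norm_eq, Real.sq_sqrt (by positivity)]
    simp [Real.norm_eq_abs, sq_abs]
  have hsum : ∑ i, φ (EuclideanSpace.single i (1:ℝ)) = (d:ℝ) := by
    have hi : ∀ i : Fin d, Integrable (fun u : EuclideanSpace ℝ (Fin d) => (u i)^2) μ := by
      intro i
      have := hint (EuclideanSpace.single i (1:ℝ))
      simpa [EuclideanSpace.inner_single_left] using this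
    calc ∑ i, φ (EuclideanSpace.single i (1:ℝ)) = ∑ i, ∫ u, (u i)^2 ∂μ := by
          simp [hsingle]
    _ = ∫ u, ∑ i, (u i)^2 ∂μ := (integral_finset_sum _ fun i _ => hi i).symm
    _ = ∫ u, ‖u‖^2 ∂μ := by
          refine integral_congr_ae (Filter.Eventually.of_forall fun u => hnormsq u)
    _ = ∫ _u, (d:ℝ) ∂μ := integral_congr_ae hu2
    _ = (d:ℝ) := by simp
  have hone : ∀ i j : Fin d, φ (EuclideanSpace.single i (1:ℝ)) =
      φ (EuclideanSpace.single j (1:ℝ)) := by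
    intro i j
    have hn : ‖EuclideanSpace.single i (1:ℝ)‖ = ‖EuclideanSpace.single j (1:ℝ)‖ := by
      simp [EuclideanSpace.norm_single]
    have hr := Submodule.reflection_sub (F := EuclideanSpace ℝ (Fin d)) hn
    have := hφT (Submodule.reflection (ℝ ∙ (EuclideanSpace.single i (1:ℝ) - EuclideanSpace.single j 1))ᗮ)
      (EuclideanSpace.single i (1:ℝ))
    rw [hr] at this
    exact this.symm
  -- conclude
  rcases eq_or_ne v 0 with rfl | hv
  · simp [hφdef]
  · have hdpos : 0 < d := by
      rcases Nat.eq_zero_or_pos d with hd | hd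
      · exfalso; apply hv; subst hd; exact Subsingleton.elim v 0
      · exact hd
    obtain ⟨i0⟩ := Fin.pos_iff_nonempty.mp hdpos
    have heach : φ (EuclideanSpace.single i0 (1:ℝ)) = 1 := by
      have : ∑ i : Fin d, φ (EuclideanSpace.single i (1:ℝ)) =
          (d:ℝ) * φ (EuclideanSpace.single i0 (1:ℝ)) := by
        rw [Finset.sum_congr rfl fun i _ => hone i i0]
        simp [Finset.sum_const, mul_comm]
      rw [this] at hsum
      have hdne : (d:ℝ) ≠ 0 := by positivity
      field_simp at hsum
      linarith
    set w := ‖v‖⁻¹ • v with hw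
    have hwn : ‖w‖ = 1 := norm_smul_inv_norm hv
    have hvw : v = ‖v‖ • w := by
      rw [hw, smul_smul, mul_inv_cancel₀ (norm_ne_zero_iff.mpr hv), one_smul]
    have hscale : φ v = ‖v‖^2 * φ w := by
      rw [hvw, hφdef]
      simp only [real_inner_smul_left, mul_pow]
      rw [integral_const_mul]
      congr 1
      · rw [norm_smul]; simp [hwn, Real.norm_eq_abs, abs_of_nonneg (norm_nonneg v)]
    have hweq : φ w = φ (EuclideanSpace.single i0 (1:ℝ)) := by
      have hn : ‖w‖ = ‖EuclideanSpace.single i0 (1:ℝ)‖ := by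
        simp [hwn, EuclideanSpace.norm_single]
      have hr := Submodule.reflection_sub (F := EuclideanSpace ℝ (Fin d)) hn
      have := hφT (Submodule.reflection (ℝ ∙ (w - EuclideanSpace.single i0 1))ᗮ) w
      rw [hr] at this
      exact this.symm
    show φ v = ‖v‖ ^ 2
    rw [hscale, hweq, heach, mul_one]

/-- If `f : ℝ^d → ℝ` is L-smooth and
`g(x) = ((f(x+λu) - f(x-λu))/(2λ)) • u` with `u` uniform on the sphere of radius `√d`
(characterized as the rotation-invariant probability measure on that sphere), then
`E_u[‖g(x)‖²] ≤ 2d·‖∇f(x)‖² + (L²/2)·λ²·d³`. -/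
theorem stmt3 {d : ℕ} (f : EuclideanSpace ℝ (Fin d) → ℝ) (L lam : ℝ)
    (hlam : 0 < lam)
    (hdiff : ∀ x, DifferentiableAt ℝ f x)
    (hsmooth : ∀ x y, ‖gradient f x - gradient f y‖ ≤ L * ‖x - y‖)
    (μ : Measure (EuclideanSpace ℝ (Fin d))) [IsProbabilityMeasure μ]
    (hsupp : μ (Metric.sphere (0 : EuclideanSpace ℝ (Fin d)) (Real.sqrt d)) = 1)
    (hinv : ∀ T : EuclideanSpace ℝ (Fin d) ≃ₗᵢ[ℝ] EuclideanSpace ℝ (Fin d),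
      Measure.map (⇑T) μ = μ)
    (x : EuclideanSpace ℝ (Fin d)) :
    (∫ u, ‖((f (x + lam • u) - f (x - lam • u)) / (2 * lam)) • u‖ ^ 2 ∂μ)
      ≤ 2 * d * ‖gradient f x‖ ^ 2 + (L ^ 2 / 2) * lam ^ 2 * (d : ℝ) ^ 3 := by
  rcases Nat.eq_zero_or_pos d with hd | hdpos
  · subst hd
    have hz : (fun u : EuclideanSpace ℝ (Fin 0) =>
        ‖((f (x + lam • u) - f (x - lam • u)) / (2 * lam)) • u‖ ^ 2) = fun _ => (0:ℝ) := by
      funext u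
      rw [Subsingleton.elim u 0]
      simp
    rw [hz, integral_zero]
    positivity
  have hd0 : (0:ℝ) ≤ (d:ℝ) := Nat.cast_nonneg d
  set v := gradient f x with hv
  -- L is nonnegative
  have hL : 0 ≤ L := by
    obtain ⟨i⟩ := Fin.pos_iff_nonempty.mp hdpos
    have h := hsmooth x (x + EuclideanSpace.single i (1:ℝ))
    have hn : ‖x - (x + EuclideanSpace.single i (1:ℝ))‖ = 1 := by
      simp [EuclideanSpace.norm_single]
    rw [hn, mul_one] at h
    exact le_trans (norm_nonneg _) h
  have hfc : Continuous f := continuous_iff_continuousAt.mpr fun z => (hdiff z).continuousAt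
  have hgc : Continuous (fun u : EuclideanSpace ℝ (Fin d) =>
      ‖((f (x + lam • u) - f (x - lam • u)) / (2 * lam)) • u‖ ^ 2) := by
    apply Continuous.pow
    apply Continuous.norm
    exact (((hfc.comp (continuous_const.add (continuous_id.const_smul lam))).sub
      (hfc.comp (continuous_const.sub (continuous_id.const_smul lam)))).div_const _).smul
      continuous_id
  -- pointwise bound on the sphere
  have hpt : ∀ u : EuclideanSpace ℝ (Fin d), ‖u‖ = Real.sqrt d →
      ‖((f (x + lam • u) - f (x - lam • u)) / (2 * lam)) • u‖ ^ 2 ≤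
        2 * d * ⟪v, u⟫ ^ 2 + L ^ 2 / 2 * lam ^ 2 * (d:ℝ) ^ 3 := by
    intro u hu
    have hu2 : ‖u‖ ^ 2 = (d:ℝ) := by rw [hu]; exact Real.sq_sqrt hd0
    set b : ℝ := ⟪v, u⟫ with hbdef
    have t1 := taylor_bound' f L hdiff hsmooth x (x + lam • u)
    have t2 := taylor_bound' f L hdiff hsmooth x (x - lam • u)
    have e1 : x + lam • u - x = lam • u := add_sub_cancel_left x _
    have e2 : x - lam • u - x = -(lam • u) := by abel
    rw [e1] at t1
    rw [e2, norm_neg, inner_neg_right] at t2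
    rw [real_inner_smul_right] at t1 t2
    have hns : ‖lam • u‖ ^ 2 = lam ^ 2 * d := by
      rw [norm_smul, mul_pow, Real.norm_eq_abs, sq_abs, hu2]
    rw [hns] at t1 t2
    -- combine
    have habs : |f (x + lam • u) - f (x - lam • u) - 2 * lam * b| ≤ L * lam ^ 2 * d := by
      have := abs_sub (f (x + lam • u) - f x - lam * b) (f (x - lam • u) - f x - -(lam * b))
      calc |f (x + lam • u) - f (x - lam • u) - 2 * lam * b|
          = |(f (x + lam • u) - f x - lam * b) - (f (x - lam • u) - f x - -(lam * b))| := by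
            ring_nf
      _ ≤ |f (x + lam • u) - f x - lam * b| + |f (x - lam • u) - f x - -(lam * b)| := this
      _ ≤ L / 2 * (lam ^ 2 * d) + L / 2 * (lam ^ 2 * d) := add_le_add t1 t2
      _ = L * lam ^ 2 * d := by ring
    set c : ℝ := (f (x + lam • u) - f (x - lam • u)) / (2 * lam) with hcdef
    have h1 : |c - b| ≤ L * lam * d / 2 := by
      have hc : c - b = (f (x + lam • u) - f (x - lam • u) - 2 * lam * b) / (2 * lam) := by
        rw [hcdef]; field_simp
      rw [hc, abs_div, abs_of_pos (by positivity : (0:ℝ) < 2 * lam), div_le_iff₀ (by positivity)]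
      calc |f (x + lam • u) - f (x - lam • u) - 2 * lam * b| ≤ L * lam ^ 2 * d := habs
      _ = L * lam * d / 2 * (2 * lam) := by ring
    have h2 : (c - b) ^ 2 ≤ (L * lam * d / 2) ^ 2 := by
      rw [← sq_abs (c - b)]
      exact pow_le_pow_left₀ (abs_nonneg _) h1 2
    have h3 : ‖c • u‖ ^ 2 = c ^ 2 * d := by
      rw [norm_smul, mul_pow, Real.norm_eq_abs, sq_abs, hu2]
    rw [h3]
    nlinarith [mul_nonneg hd0 (sq_nonneg (b - (c - b))), mul_le_mul_of_nonneg_left h2 hd0, hd0]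
  -- integrability
  have hvd : ∀ u : EuclideanSpace ℝ (Fin d), ‖u‖ = Real.sqrt d → ⟪v, u⟫ ^ 2 ≤ ‖v‖ ^ 2 * d := by
    intro u hu
    have h1 : |(⟪v, u⟫ : ℝ)| ≤ ‖v‖ * ‖u‖ := abs_real_inner_le_norm v u
    have h2 : ‖u‖ ^ 2 = (d:ℝ) := by rw [hu]; exact Real.sq_sqrt hd0
    calc (⟪v, u⟫:ℝ) ^ 2 = |(⟪v, u⟫:ℝ)| ^ 2 := (sq_abs _).symm
    _ ≤ (‖v‖ * ‖u‖) ^ 2 := pow_le_pow_left₀ (abs_nonneg _) h1 2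
    _ = ‖v‖ ^ 2 * d := by rw [mul_pow, h2]
  have hintL : Integrable (fun u : EuclideanSpace ℝ (Fin d) =>
      ‖((f (x + lam • u) - f (x - lam • u)) / (2 * lam)) • u‖ ^ 2) μ := by
    refine integrable_of_sphere_bound' μ hsupp _
      (2 * d * (‖v‖ ^ 2 * d) + L ^ 2 / 2 * lam ^ 2 * (d:ℝ) ^ 3) hgc ?_
    intro u hu
    rw [abs_of_nonneg (by positivity)]
    refine (hpt u hu).trans ?_
    have := hvd u hu
    nlinarith [hd0]
  have hintI : Integrable (fun u : EuclideanSpace ℝ (Fin d) => (⟪v, u⟫:ℝ) ^ 2) μ := by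
    refine integrable_of_sphere_bound' μ hsupp _ (‖v‖ ^ 2 * d)
      ((continuous_const.inner continuous_id).pow 2) ?_
    intro u hu
    rw [abs_of_nonneg (sq_nonneg _)]
    exact hvd u hu
  have hintR : Integrable (fun u : EuclideanSpace ℝ (Fin d) =>
      2 * d * (⟪v, u⟫:ℝ) ^ 2 + L ^ 2 / 2 * lam ^ 2 * (d:ℝ) ^ 3) μ :=
    (hintI.const_mul _).add (integrable_const _)
  have hmono : (∫ u, ‖((f (x + lam • u) - f (x - lam • u)) / (2 * lam)) • u‖ ^ 2 ∂μ)
      ≤ ∫ u, (2 * d * (⟪v, u⟫:ℝ) ^ 2 + L ^ 2 / 2 * lam ^ 2 * (d:ℝ) ^ 3) ∂μ := by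
    refine integral_mono_ae hintL hintR ?_
    filter_upwards [sphere_ae' μ hsupp] with u hu
    exact hpt u hu
  refine hmono.trans ?_
  rw [integral_add (hintI.const_mul _) (integrable_const _), integral_const_mul,
    second_moment' μ hsupp hinv v, integral_const]
  simp only [probReal_univ, smul_eq_mul, one_mul]
  apply le_of_eq
  ring
end

section
/- If a mechanism M satisfies μ-Gaussian differential privacy, then it satisfies (ε, δ(ε))-differential privacy for every ε ≥ 0 with δ(ε) = Φ(−ε/μ + μ/2) − e^ε·Φ(−ε/μ − μ/2), where Φ is the standard normal CDF. -/
open MeasureTheory ProbabilityTheory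

/-- The trade-off function `T(P, Q)(α) = inf {β_φ : α_φ ≤ α}` over measurable tests
`φ : Ω → [0,1]`, where `α_φ = ∫ φ dP` and `β_φ = 1 − ∫ φ dQ`. -/
noncomputable def tradeoff {Ω : Type*} [MeasurableSpace Ω] (P Q : Measure Ω) (α : ℝ) : ℝ :=
  sInf {β | ∃ φ : Ω → ℝ, Measurable φ ∧ (∀ ω, φ ω ∈ Set.Icc (0 : ℝ) 1) ∧
    (∫ ω, φ ω ∂P) ≤ α ∧ β = 1 - ∫ ω, φ ω ∂Q}

/-- The standard normal CDF `Φ`. -/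
noncomputable def stdNormalCDF (x : ℝ) : ℝ := cdf (gaussianReal 0 1) x

open Real Set
open scoped ENNReal NNReal

lemma integral_gaussianReal_eq (m : ℝ) (ψ : ℝ → ℝ) :
    ∫ x, ψ x ∂(gaussianReal m 1) = ∫ x, gaussianPDFReal m 1 x * ψ x := by
  rw [gaussianReal_of_var_ne_zero m one_ne_zero]
  have h : gaussianPDF m 1 = fun x => ((gaussianPDFReal m 1 x).toNNReal : ℝ≥0∞) := rfl
  rw [h, integral_withDensity_eq_integral_smul (measurable_gaussianPDFReal m 1).real_toNNReal]
  congr 1; ext x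
  rw [NNReal.smul_def, smul_eq_mul, Real.coe_toNNReal _ (gaussianPDFReal_nonneg _ _ _)]

lemma stdNormalCDF_eq (t : ℝ) : stdNormalCDF t = ∫ x in Iic t, gaussianPDFReal 0 1 x := by
  rw [stdNormalCDF, cdf_eq_real, measureReal_def, gaussianReal_apply_eq_integral 0 one_ne_zero,
    ENNReal.toReal_ofReal (setIntegral_nonneg measurableSet_Iic
      (fun x _ => gaussianPDFReal_nonneg _ _ _))]

lemma stdNormalCDF_shift (m t : ℝ) :
    stdNormalCDF (t - m) = ∫ x in Iic t, gaussianPDFReal m 1 x := by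
  have hmap : (gaussianReal 0 1).map (· + m) = gaussianReal m 1 := by
    rw [gaussianReal_map_add_const, zero_add]
  have h1 : (gaussianReal m 1) (Iic t) = (gaussianReal 0 1) (Iic (t - m)) := by
    rw [← hmap, Measure.map_apply (measurable_add_const m) measurableSet_Iic]
    congr 1; ext x; simp [le_sub_iff_add_le]
  have h2 : (gaussianReal m 1) (Iic t)
      = ENNReal.ofReal (∫ x in Iic t, gaussianPDFReal m 1 x) :=
    gaussianReal_apply_eq_integral m one_ne_zero _
  rw [stdNormalCDF, cdf_eq_real, measureReal_def, ← h1, h2, ENNReal.toReal_ofReal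
    (setIntegral_nonneg measurableSet_Iic (fun x _ => gaussianPDFReal_nonneg _ _ _))]

lemma keyA {μ ε : ℝ} (hμ : 0 < μ) (ψ : ℝ → ℝ) (hm : Measurable ψ)
    (hb : ∀ x, ψ x ∈ Set.Icc (0:ℝ) 1) :
    ∫ x, ψ x ∂(gaussianReal 0 1) ≤ Real.exp ε * ∫ x, ψ x ∂(gaussianReal μ 1)
      + (stdNormalCDF (-ε/μ + μ/2) - Real.exp ε * stdNormalCDF (-ε/μ - μ/2)) := by
  set t : ℝ := -ε/μ + μ/2 with ht
  set p : ℝ → ℝ := gaussianPDFReal 0 1 with hp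
  set q : ℝ → ℝ := gaussianPDFReal μ 1 with hq
  have hδ2 : stdNormalCDF (-ε/μ - μ/2) = ∫ x in Iic t, q x := by
    have : -ε/μ - μ/2 = t - μ := by ring
    rw [this, stdNormalCDF_shift]
  have hδ1 : stdNormalCDF t = ∫ x in Iic t, p x := stdNormalCDF_eq t
  rw [integral_gaussianReal_eq, integral_gaussianReal_eq, hδ1, hδ2, ← hp, ← hq]
  -- integrability
  have hip : Integrable p := integrable_gaussianPDFReal 0 1
  have hiq : Integrable q := integrable_gaussianPDFReal μ 1
  have hipψ : Integrable (fun x => p x * ψ x) := by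
    refine hip.mono' ((measurable_gaussianPDFReal 0 1).mul hm).aestronglyMeasurable ?_
    refine Filter.Eventually.of_forall fun x => ?_
    have h0 := gaussianPDFReal_nonneg 0 1 x
    have := hb x
    rw [Real.norm_eq_abs, abs_mul, abs_of_nonneg h0, abs_of_nonneg this.1]
    exact mul_le_of_le_one_right h0 this.2
  have hiqψ : Integrable (fun x => q x * ψ x) := by
    refine hiq.mono' ((measurable_gaussianPDFReal μ 1).mul hm).aestronglyMeasurable ?_
    refine Filter.Eventually.of_forall fun x => ?_
    have h0 := gaussianPDFReal_nonneg μ 1 x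
    have := hb x
    rw [Real.norm_eq_abs, abs_mul, abs_of_nonneg h0, abs_of_nonneg this.1]
    exact mul_le_of_le_one_right h0 this.2
  -- sign of the density difference
  have hC : (0:ℝ) < (Real.sqrt (2 * π * 1))⁻¹ := by
    rw [inv_pos]
    exact Real.sqrt_pos.mpr (by positivity)
  have hd : ∀ x, p x - Real.exp ε * q x
      = (Real.sqrt (2 * π * 1))⁻¹ *
        (Real.exp (-(x - 0)^2 / (2*1)) - Real.exp (ε + -(x - μ)^2 / (2*1))) := by
    intro x
    simp only [hp, hq, gaussianPDFReal, NNReal.coe_one, Real.exp_add]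
    ring
  have hxt : ∀ x, x * μ ≤ t * μ ↔ x ≤ t := fun x =>
    mul_le_mul_iff_of_pos_right hμ
  have htμ : t * μ = μ * μ / 2 - ε := by
    rw [ht]; field_simp; ring
  have hsign_le : ∀ x, x ≤ t → 0 ≤ p x - Real.exp ε * q x := by
    intro x hx
    rw [hd x]
    apply mul_nonneg hC.le
    rw [sub_nonneg]
    apply Real.exp_le_exp.mpr
    have h' : x * μ ≤ μ * μ / 2 - ε := htμ ▸ (mul_le_mul_of_nonneg_right hx hμ.le)
    nlinarith [h']
  have hsign_ge : ∀ x, t ≤ x → p x - Real.exp ε * q x ≤ 0 := by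
    intro x hx
    rw [hd x]
    apply mul_nonpos_of_nonneg_of_nonpos hC.le
    rw [sub_nonpos]
    apply Real.exp_le_exp.mpr
    have h' : μ * μ / 2 - ε ≤ x * μ := htμ ▸ (mul_le_mul_of_nonneg_right hx hμ.le)
    nlinarith [h']
  -- main comparison
  have hind : Integrable (fun x => Set.indicator (Iic t) (fun x => p x - Real.exp ε * q x) x) :=
    (hip.sub (hiq.const_mul _)).indicator measurableSet_Iic
  have hmono : ∫ x, (p x * ψ x - Real.exp ε * (q x * ψ x))
      ≤ ∫ x, Set.indicator (Iic t) (fun x => p x - Real.exp ε * q x) x := by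
    apply integral_mono (hipψ.sub (hiqψ.const_mul _)) hind
    intro x
    simp only [Pi.sub_apply]
    have hrw : p x * ψ x - Real.exp ε * (q x * ψ x) = (p x - Real.exp ε * q x) * ψ x := by ring
    rw [hrw]
    by_cases hx : x ∈ Iic t
    · rw [Set.indicator_of_mem hx]
      exact mul_le_of_le_one_right (hsign_le x hx) (hb x).2
    · rw [Set.indicator_of_notMem hx]
      exact mul_nonpos_of_nonpos_of_nonneg (hsign_ge x (le_of_not_ge hx)) (hb x).1
  have heq1 : ∫ x, (p x * ψ x - Real.exp ε * (q x * ψ x))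
      = (∫ x, p x * ψ x) - Real.exp ε * ∫ x, q x * ψ x := by
    rw [integral_sub hipψ (hiqψ.const_mul _), integral_const_mul]
  have heq2 : ∫ x, Set.indicator (Iic t) (fun x => p x - Real.exp ε * q x) x
      = (∫ x in Iic t, p x) - Real.exp ε * ∫ x in Iic t, q x := by
    rw [integral_indicator measurableSet_Iic,
      integral_sub hip.restrict ((hiq.restrict).const_mul _), integral_const_mul]
  rw [heq1, heq2] at hmono
  linarith

/-- If a mechanism `M` is μ-GDP (its trade-off function between any two
neighboring outputs dominates `G_μ = T(N(0,1), N(μ,1))`), then it satisfies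
`(ε, δ(ε))`-DP for every `ε ≥ 0` with
`δ(ε) = Φ(−ε/μ + μ/2) − e^ε Φ(−ε/μ − μ/2)`. -/
theorem stmt11 {X : Type*} {Ω : Type*} [MeasurableSpace Ω]
    (Neighbor : X → X → Prop) (M : X → Measure Ω)
    (hM : ∀ x, IsProbabilityMeasure (M x)) (μ : ℝ) (hμ : 0 < μ)
    (hGDP : ∀ x x', Neighbor x x' → ∀ α ∈ Set.Icc (0 : ℝ) 1,
      tradeoff (gaussianReal 0 1) (gaussianReal μ 1) α ≤ tradeoff (M x) (M x') α) :
    ∀ ε : ℝ, 0 ≤ ε → ∀ x x', Neighbor x x' → ∀ E : Set Ω, MeasurableSet E →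
      M x E ≤ ENNReal.ofReal (Real.exp ε) * M x' E +
        ENNReal.ofReal (stdNormalCDF (-ε / μ + μ / 2)
          - Real.exp ε * stdNormalCDF (-ε / μ - μ / 2)) := by
  intro ε hε x x' hN E hE
  haveI := hM x; haveI := hM x'
  set δ : ℝ := stdNormalCDF (-ε / μ + μ / 2) - Real.exp ε * stdNormalCDF (-ε / μ - μ / 2) with hδ
  set α : ℝ := (M x Eᶜ).toReal with hα
  have hα01 : α ∈ Set.Icc (0:ℝ) 1 := ⟨ENNReal.toReal_nonneg, by
    rw [hα]; exact ENNReal.toReal_le_of_le_ofReal one_pos.le (by simpa using prob_le_one)⟩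
  -- the indicator test: tradeoff (M x) (M x') α ≤ (M x' E).toReal
  have hcompl : ∀ (ν : Measure Ω), IsProbabilityMeasure ν →
      (ν Eᶜ).toReal = 1 - (ν E).toReal := by
    intro ν hν
    have h := measure_add_measure_compl (μ := ν) hE
    have : (ν E).toReal + (ν Eᶜ).toReal = 1 := by
      rw [← ENNReal.toReal_add (measure_ne_top _ _) (measure_ne_top _ _), h]; simp
    linarith
  have hup : tradeoff (M x) (M x') α ≤ (M x' E).toReal := by
    have hmem : (M x' E).toReal ∈ {β | ∃ φ : Ω → ℝ, Measurable φ ∧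
        (∀ ω, φ ω ∈ Set.Icc (0 : ℝ) 1) ∧ (∫ ω, φ ω ∂(M x)) ≤ α ∧
        β = 1 - ∫ ω, φ ω ∂(M x')} := by
      refine ⟨Set.indicator Eᶜ 1, (measurable_one.indicator hE.compl), ?_, ?_, ?_⟩
      · intro ω
        by_cases h : ω ∈ Eᶜ <;> simp [Set.indicator_of_mem, Set.indicator_of_notMem, h]
      · rw [integral_indicator_one hE.compl]; exact le_rfl
      · rw [integral_indicator_one hE.compl, measureReal_def, hcompl (M x') (hM x')]; ring
    refine csInf_le ⟨0, ?_⟩ hmem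
    rintro β ⟨φ, hφm, hφb, -, rfl⟩
    have hint : Integrable φ (M x') := by
      refine (integrable_const (1:ℝ)).mono' hφm.aestronglyMeasurable ?_
      exact Filter.Eventually.of_forall fun ω => by
        rw [Real.norm_eq_abs, abs_of_nonneg (hφb ω).1]; exact (hφb ω).2
    have : ∫ ω, φ ω ∂(M x') ≤ 1 := by
      calc ∫ ω, φ ω ∂(M x') ≤ ∫ _ω, (1:ℝ) ∂(M x') :=
            integral_mono hint (integrable_const 1) (fun ω => (hφb ω).2)
        _ = 1 := by simp
    linarith
  -- lower bound on the gaussian tradeoff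
  have hlow : Real.exp (-ε) * ((1 - α) - δ)
      ≤ tradeoff (gaussianReal 0 1) (gaussianReal μ 1) α := by
    apply le_csInf
    · exact ⟨1, fun _ => (0:ℝ), measurable_const, fun ω => by simp,
        by simpa using hα01.1, by simp⟩
    rintro β ⟨φ, hφm, hφb, hφα, rfl⟩
    have hψm : Measurable (fun ω => 1 - φ ω) := measurable_const.sub hφm
    have hψb : ∀ ω, (1 - φ ω) ∈ Set.Icc (0:ℝ) 1 := fun ω =>
      ⟨by linarith [(hφb ω).2], by linarith [(hφb ω).1]⟩
    have hk := keyA (ε := ε) hμ _ hψm hψb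
    have hintP : Integrable φ (gaussianReal 0 1) := by
      refine (integrable_const (1:ℝ)).mono' hφm.aestronglyMeasurable ?_
      exact Filter.Eventually.of_forall fun ω => by
        rw [Real.norm_eq_abs, abs_of_nonneg (hφb ω).1]; exact (hφb ω).2
    have hintQ : Integrable φ (gaussianReal μ 1) := by
      refine (integrable_const (1:ℝ)).mono' hφm.aestronglyMeasurable ?_
      exact Filter.Eventually.of_forall fun ω => by
        rw [Real.norm_eq_abs, abs_of_nonneg (hφb ω).1]; exact (hφb ω).2
    have e1 : ∫ ω, (1 - φ ω) ∂(gaussianReal 0 1) = 1 - ∫ ω, φ ω ∂(gaussianReal 0 1) := by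
      rw [integral_sub (integrable_const 1) hintP]; simp
    have e2 : ∫ ω, (1 - φ ω) ∂(gaussianReal μ 1) = 1 - ∫ ω, φ ω ∂(gaussianReal μ 1) := by
      rw [integral_sub (integrable_const 1) hintQ]; simp
    rw [e1, e2] at hk
    have hee : Real.exp (-ε) * Real.exp ε = 1 := by
      rw [← Real.exp_add]; simp
    have hepos : (0:ℝ) < Real.exp (-ε) := Real.exp_pos _
    -- 1 - α ≤ 1 - ∫φ dP ≤ e^ε (1 - ∫φ dQ) + δ
    have h2 : 1 - α ≤ Real.exp ε * (1 - ∫ ω, φ ω ∂(gaussianReal μ 1)) + δ := by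
      rw [hδ]; linarith
    calc Real.exp (-ε) * ((1 - α) - δ)
        ≤ Real.exp (-ε) * (Real.exp ε * (1 - ∫ ω, φ ω ∂(gaussianReal μ 1))) := by
          apply mul_le_mul_of_nonneg_left (by linarith) hepos.le
      _ = 1 - ∫ ω, φ ω ∂(gaussianReal μ 1) := by rw [← mul_assoc, hee, one_mul]
  have hGDPab := hGDP x x' hN α hα01
  have hmain : Real.exp (-ε) * ((1 - α) - δ) ≤ (M x' E).toReal :=
    le_trans hlow (le_trans hGDPab hup)
  have h1α : 1 - α = (M x E).toReal := by
    rw [hα, hcompl (M x) (hM x)]; ring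
  have hee : Real.exp ε * Real.exp (-ε) = 1 := by rw [← Real.exp_add]; simp
  have hreal : (M x E).toReal ≤ Real.exp ε * (M x' E).toReal + δ := by
    have := mul_le_mul_of_nonneg_left hmain (Real.exp_pos ε).le
    rw [← mul_assoc, hee, one_mul] at this
    linarith [h1α ▸ this]
  calc M x E = ENNReal.ofReal ((M x E).toReal) := by
        rw [ENNReal.ofReal_toReal (measure_ne_top _ _)]
    _ ≤ ENNReal.ofReal (Real.exp ε * (M x' E).toReal + δ) :=
        ENNReal.ofReal_le_ofReal hreal
    _ ≤ ENNReal.ofReal (Real.exp ε * (M x' E).toReal) + ENNReal.ofReal δ :=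
        ENNReal.ofReal_add_le
    _ ≤ ENNReal.ofReal (Real.exp ε) * M x' E + ENNReal.ofReal δ := by
        rw [ENNReal.ofReal_mul (Real.exp_pos ε).le, ENNReal.ofReal_toReal (measure_ne_top _ _)]
end
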